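/- Let n ≥ 2, d ≥ 2, and let t₁ = t₂ = ⋯ = t_d = 1. Then for every i with 0 < i < d and every i-tuple of positive integers a₁, …, a_i with a₁ + ⋯ + a_i ≤ n and a₁ + ⋯ + a_i ≡ 0 (mod n), there exist integers b₁, …, b_i with 0 < b_j ≤ a_j + 1 for all j and b₁ + ⋯ + b_i ≡ −(d − i) (mod n). (This is the numerical criterion showing that Veronese subalgebras are nearly Gorenstein.) -/

import Mathlib

/-- Distribute a nonnegative amount `r ≤ ∑ a` among slots with caps `a k`. -/
lemma aux_distrib : ∀ (m : ℕ) (a : ℕ → ℤ) (r : ℤ), (∀ k < m, 0 ≤ a k) → 0 ≤ r →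
    r ≤ ∑ k ∈ Finset.range m, a k →
    ∃ c : ℕ → ℤ, (∀ k < m, 0 ≤ c k ∧ c k ≤ a k) ∧ ∑ k ∈ Finset.range m, c k = r := by
  intro m
  induction m with
  | zero =>
    intro a r _ hr hsum
    simp only [Finset.range_zero, Finset.sum_empty] at hsum ⊢
    exact ⟨fun _ => 0, by simp, by omega⟩
  | succ m ih =>
    intro a r ha hr hsum
    rw [Finset.sum_range_succ] at hsum
    have ham : 0 ≤ a m := ha m (Nat.lt_succ_self m)
    have h1 : 0 ≤ r - min (a m) r := by
      have := min_le_right (a m) r; omega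
    have h2 : r - min (a m) r ≤ ∑ k ∈ Finset.range m, a k := by
      rcases le_total (a m) r with h | h
      · rw [min_eq_left h]; omega
      · rw [min_eq_right h]
        simp only [sub_self]
        exact Finset.sum_nonneg fun k hk =>
          ha k (Nat.lt_succ_of_lt (Finset.mem_range.mp hk))
    obtain ⟨c, hc, hcsum⟩ := ih a (r - min (a m) r)
      (fun k hk => ha k (Nat.lt_succ_of_lt hk)) h1 h2
    refine ⟨Function.update c m (min (a m) r), ?_, ?_⟩
    · intro k hk
      rcases Nat.lt_succ_iff_lt_or_eq.mp hk with hk' | rfl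
      · rw [Function.update_of_ne (Nat.ne_of_lt hk')]
        exact hc k hk'
      · rw [Function.update_self]
        exact ⟨le_min ham hr, min_le_left _ _⟩
    · rw [Finset.sum_range_succ, Function.update_self]
      have : ∑ k ∈ Finset.range m, Function.update c m (min (a m) r) k
          = ∑ k ∈ Finset.range m, c k := by
        refine Finset.sum_congr rfl fun k hk => ?_
        exact Function.update_of_ne (Nat.ne_of_lt (Finset.mem_range.mp hk)) _ _
      rw [this, hcsum]; ring

/-- Rewrite a sum over `Fin d` indices `< i` as a sum over `range i`. -/
lemma sum_filter_eq (d i : ℕ) (hid : i ≤ d) (f : Fin d → ℤ) :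
    ∑ j ∈ Finset.univ.filter (fun j : Fin d => (j : ℕ) < i), f j
      = ∑ k ∈ Finset.range i, (if h : k < d then f ⟨k, h⟩ else 0) := by
  refine Finset.sum_bij' (fun j _ => (j : ℕ)) (fun k hk => (⟨k, lt_of_lt_of_le (Finset.mem_range.mp hk) hid⟩ : Fin d)) ?_ ?_ ?_ ?_ ?_
  · intro j hj
    simp only [Finset.mem_filter, Finset.mem_univ, true_and] at hj
    exact Finset.mem_range.mpr hj
  · intro k hk
    simp only [Finset.mem_filter, Finset.mem_univ, true_and]
    exact Finset.mem_range.mp hk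
  · intro j hj; exact Fin.ext rfl
  · intro k hk; rfl
  · intro j hj
    have : (j : ℕ) < d := j.isLt
    simp [this]

/-- The numerical nearly-Gorenstein criterion for Veronese subalgebras
`1/n(1,…,1)` (all weights equal to 1). -/
theorem stmt_4 (n : ℤ) (hn : 2 ≤ n) (d : ℕ) (hd : 2 ≤ d) :
    ∀ i : ℕ, 0 < i → i < d → ∀ a : Fin d → ℤ,
      (∀ j : Fin d, (j : ℕ) < i → 0 < a j) →
      (∑ j ∈ Finset.univ.filter (fun j : Fin d => (j : ℕ) < i), a j) ≤ n →
      (∑ j ∈ Finset.univ.filter (fun j : Fin d => (j : ℕ) < i), a j) ≡ 0 [ZMOD n] →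
      ∃ b : Fin d → ℤ,
        (∀ j : Fin d, (j : ℕ) < i → 0 < b j ∧ b j ≤ a j + 1) ∧
        (∑ j ∈ Finset.univ.filter (fun j : Fin d => (j : ℕ) < i), b j)
          ≡ -((d : ℤ) - i) [ZMOD n] := by
  intro i hi hid a ha hsum hmod
  have hid' : i ≤ d := le_of_lt hid
  set S := ∑ j ∈ Finset.univ.filter (fun j : Fin d => (j : ℕ) < i), a j with hS
  -- the sum is positive
  have hSpos : 0 < S := by
    apply Finset.sum_pos
    · intro j hj
      simp only [Finset.mem_filter, Finset.mem_univ, true_and] at hj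
      exact ha j hj
    · refine ⟨⟨0, by omega⟩, ?_⟩
      simp only [Finset.mem_filter, Finset.mem_univ, true_and]
      exact hi
  have hdvd : n ∣ S := by
    have := (Int.modEq_zero_iff_dvd).mp hmod
    exact this
  have hSn : S = n := by
    rcases hdvd with ⟨k, hk⟩
    have hk1 : 1 ≤ k := by nlinarith
    nlinarith
  set r := (-(d : ℤ)) % n with hr
  have hr0 : 0 ≤ r := Int.emod_nonneg _ (by omega)
  have hrn : r < n := Int.emod_lt_of_pos _ (by omega)
  set a' : ℕ → ℤ := fun k => if h : k < d then a ⟨k, h⟩ else 0 with ha'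
  have hsum' : ∑ k ∈ Finset.range i, a' k = S := (sum_filter_eq d i hid' a).symm
  obtain ⟨c, hc, hcsum⟩ := aux_distrib i a' r
    (fun k hk => by
      have hkd : k < d := lt_of_lt_of_le hk hid'
      simp only [ha', dif_pos hkd]
      exact le_of_lt (ha ⟨k, hkd⟩ hk))
    hr0 (by rw [hsum', hSn]; omega)
  refine ⟨fun j => 1 + c (j : ℕ), ?_, ?_⟩
  · intro j hj
    have hjd : (j : ℕ) < d := j.isLt
    have := hc (j : ℕ) hj
    have haj : a' (j : ℕ) = a j := by simp [ha', dif_pos hjd]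
    refine ⟨show (0:ℤ) < 1 + c (j : ℕ) by omega, show 1 + c (j : ℕ) ≤ a j + 1 from ?_⟩
    rw [haj] at this; omega
  · rw [sum_filter_eq d i hid']
    have hre : ∑ k ∈ Finset.range i, (if h : k < d then (1 + c (((⟨k, h⟩ : Fin d)) : ℕ)) else 0)
        = ∑ k ∈ Finset.range i, (1 + c k) := by
      refine Finset.sum_congr rfl fun k hk => ?_
      have hkd : k < d := lt_of_lt_of_le (Finset.mem_range.mp hk) hid'
      simp [dif_pos hkd]
    rw [hre, Finset.sum_add_distrib, hcsum, Finset.sum_const, Finset.card_range]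
    have hmodr : r ≡ -(d : ℤ) [ZMOD n] := Int.emod_emod_of_dvd _ dvd_rfl
    have : (i : ℤ) • (1 : ℤ) + r ≡ (i : ℤ) + -(d : ℤ) [ZMOD n] := by
      simpa using hmodr.add_left ((i : ℤ))
    calc (i • (1 : ℤ)) + r ≡ (i : ℤ) + -(d : ℤ) [ZMOD n] := this
      _ = -((d : ℤ) - i) := by ring
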